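/- Let $z=x+y$, where $x,y\in[0,1)$ have binary expansions whose digits vanish at every odd position (i.e. $x_{2n-1}=y_{2n-1}=0$ for all $n\ge1$) and are not eventually $1$, and suppose $z$ has a binary expansion $z=\sum_j z_j2^{-j}$ not terminating with $1$'s. Then for every $n\ge1$ the pair $(z_{2n-1},z_{2n})$ belongs to $\{(0,0),(0,1),(1,0)\}$; moreover $(z_{2n-1},z_{2n})=(0,0)$ implies $x_{2n}=y_{2n}=0$, $(z_{2n-1},z_{2n})=(1,0)$ implies $x_{2n}=y_{2n}=1$, and $(z_{2n-1},z_{2n})=(0,1)$ implies exactly one of $x_{2n},y_{2n}$ equals $1$. -/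

import Mathlib

set_option maxHeartbeats 1000000

private lemma digitSummable (d : ℕ → ℕ) (M : ℕ) (hd : ∀ n, d n ≤ M) :
    Summable (fun k => (d k : ℝ) / 4 ^ (k + 1)) := by
  have hg : Summable (fun k : ℕ => (M : ℝ) * (1/4) ^ k) :=
    (summable_geometric_of_lt_one (by norm_num) (by norm_num)).mul_left _
  refine Summable.of_nonneg_of_le (fun k => by positivity) (fun k => ?_) hg
  calc (d k : ℝ) / 4 ^ (k + 1) ≤ (M : ℝ) / 4 ^ (k + 1) := by
        gcongr; exact_mod_cast hd k
    _ ≤ (M : ℝ) / 4 ^ k := by gcongr <;> norm_num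
    _ = (M : ℝ) * (1/4) ^ k := by rw [one_div, inv_pow, div_eq_mul_inv]

private lemma tail_lt (e : ℕ → ℕ) (he : ∀ n, e n ≤ 3) (k0 : ℕ) (hk0 : e (k0 + 1) ≤ 2) :
    (∑' k : ℕ, (e (k + 1) : ℝ) / 4 ^ (k + 2)) < 1 / 4 := by
  have hsum : Summable (fun k => (e (k + 1) : ℝ) / 4 ^ (k + 2)) := by
    have := (digitSummable (fun k => e (k + 1)) 3 (fun k => he _)).mul_right ((4:ℝ)⁻¹)
    refine this.congr (fun k => ?_)
    rw [pow_succ]; ring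
  have hg : Summable (fun k : ℕ => (3:ℝ) / 4 ^ (k + 2)) := by
    have := (digitSummable (fun _ => 3) 3 (fun _ => le_refl 3)).mul_right ((4:ℝ)⁻¹)
    refine this.congr (fun k => ?_)
    push_cast
    rw [pow_succ]; ring
  have hlt : (∑' k : ℕ, (e (k + 1) : ℝ) / 4 ^ (k + 2)) < ∑' k : ℕ, (3:ℝ) / 4 ^ (k + 2) := by
    apply Summable.tsum_lt_tsum (i := k0) _ _ hsum hg
    · intro k
      exact (div_le_div_iff_of_pos_right (by positivity)).mpr (by exact_mod_cast he (k + 1) : (e (k + 1) : ℝ) ≤ 3)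
    · have h3 : (e (k0+1):ℝ) < 3 := by exact_mod_cast (by omega : e (k0+1) < 3)
      exact (div_lt_div_iff_of_pos_right (by positivity)).mpr h3
  have heval : (∑' k : ℕ, (3:ℝ) / 4 ^ (k + 2)) = 1 / 4 := by
    have h1 : ∀ k : ℕ, (3:ℝ) / 4 ^ (k + 2) = (3/16) * (1/4)^k := by
      intro k; rw [pow_add, one_div, inv_pow]; ring
    rw [tsum_congr h1, tsum_mul_left, tsum_geometric_of_lt_one (by norm_num) (by norm_num)]
    norm_num
  linarith

private lemma digit_le (d e : ℕ → ℕ) (hd : ∀ n, d n ≤ 3) (he : ∀ n, e n ≤ 3)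
    (he3 : ∀ m, ∃ k ≥ m, e k ≤ 2)
    (h : (∑' k : ℕ, (d k : ℝ) / 4 ^ (k + 1)) = ∑' k : ℕ, (e k : ℝ) / 4 ^ (k + 1)) :
    d 0 ≤ e 0 := by
  have hds := digitSummable d 3 hd
  have hes := digitSummable e 3 he
  rw [Summable.tsum_eq_zero_add hds, Summable.tsum_eq_zero_add hes] at h
  have htd : (0:ℝ) ≤ ∑' k : ℕ, (d (k + 1) : ℝ) / 4 ^ (k + 1 + 1) := by
    apply tsum_nonneg; intro k; positivity
  obtain ⟨k, hk1, hk2⟩ := he3 1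
  obtain ⟨k0, rfl⟩ : ∃ k0, k = k0 + 1 := ⟨k - 1, by omega⟩
  have hte : (∑' k : ℕ, (e (k + 1) : ℝ) / 4 ^ (k + 1 + 1)) < 1 / 4 := tail_lt e he k0 hk2
  have hlt : (d 0 : ℝ) / 4 ^ (0 + 1) < (e 0 : ℝ) / 4 ^ (0 + 1) + 1 / 4 := by linarith
  simp only [pow_one, zero_add] at hlt
  have : (d 0 : ℝ) < (e 0 : ℝ) + 1 := by linarith
  exact Nat.lt_add_one_iff.mp (by exact_mod_cast this)

private lemma digit_unique (d e : ℕ → ℕ) (hd : ∀ n, d n ≤ 3) (he : ∀ n, e n ≤ 3)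
    (hd3 : ∀ m, ∃ k ≥ m, d k ≤ 2) (he3 : ∀ m, ∃ k ≥ m, e k ≤ 2)
    (h : (∑' k : ℕ, (d k : ℝ) / 4 ^ (k + 1)) = ∑' k : ℕ, (e k : ℝ) / 4 ^ (k + 1)) :
    ∀ n, d n = e n := by
  intro n
  induction n using Nat.strong_induction_on with
  | _ n ih =>
  have hds := digitSummable d 3 hd
  have hes := digitSummable e 3 he
  have h1 := hds.sum_add_tsum_nat_add (f := fun k => (d k : ℝ) / 4 ^ (k + 1)) n
  have h2 := hes.sum_add_tsum_nat_add (f := fun k => (e k : ℝ) / 4 ^ (k + 1)) n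
  have hpre : (∑ i ∈ Finset.range n, (d i : ℝ) / 4 ^ (i + 1)) =
      ∑ i ∈ Finset.range n, (e i : ℝ) / 4 ^ (i + 1) := by
    apply Finset.sum_congr rfl
    intro i hi
    rw [ih i (Finset.mem_range.mp hi)]
  have htail : (∑' k : ℕ, (d (k + n) : ℝ) / 4 ^ (k + n + 1)) =
      ∑' k : ℕ, (e (k + n) : ℝ) / 4 ^ (k + n + 1) := by
    rw [h] at h1
    rw [← h2, hpre] at h1
    linarith
  have hre : ∀ (f : ℕ → ℕ) (k : ℕ), (f (k+n) : ℝ) / 4 ^ (k + n + 1) =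
      ((f (k+n) : ℝ) / 4 ^ (k + 1)) * ((1/4:ℝ)) ^ n := by
    intro f k
    rw [show k + n + 1 = (k + 1) + n from by omega, pow_add (4:ℝ) (k+1) n]
    rw [div_pow, one_pow]
    field_simp
  rw [tsum_congr (hre d), tsum_congr (hre e), tsum_mul_right, tsum_mul_right] at htail
  have hne : ((1/4:ℝ)) ^ n ≠ 0 := by positivity
  have htail2 : (∑' k : ℕ, (d (k + n) : ℝ) / 4 ^ (k + 1)) =
      ∑' k : ℕ, (e (k + n) : ℝ) / 4 ^ (k + 1) := mul_right_cancel₀ hne htail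
  have sh : ∀ (f : ℕ → ℕ), (∀ m, ∃ k ≥ m, f k ≤ 2) → ∀ m, ∃ k ≥ m, f (k + n) ≤ 2 := by
    intro f hf m
    obtain ⟨k, hk1, hk2⟩ := hf (m + n)
    exact ⟨k - n, by omega, by rwa [Nat.sub_add_cancel (by omega)]⟩
  have le1 := digit_le (fun k => d (k+n)) (fun k => e (k+n)) (fun k => hd _) (fun k => he _)
    (sh e he3) htail2
  have le2 := digit_le (fun k => e (k+n)) (fun k => d (k+n)) (fun k => he _) (fun k => hd _)
    (sh d hd3) htail2.symm
  simpa using le_antisymm le1 le2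

private lemma binSummable (f : ℕ → ℕ) (hf : ∀ j, f j ≤ 1) :
    Summable (fun j : ℕ => (f (j + 1) : ℝ) / 2 ^ (j + 1)) := by
  have hg : Summable (fun k : ℕ => (1/2:ℝ) ^ k) :=
    summable_geometric_of_lt_one (by norm_num) (by norm_num)
  refine Summable.of_nonneg_of_le (fun k => by positivity) (fun k => ?_) hg
  calc (f (k+1) : ℝ) / 2 ^ (k + 1) ≤ (1 : ℝ) / 2 ^ (k + 1) := by
        gcongr; exact_mod_cast hf (k+1)
    _ ≤ (1 : ℝ) / 2 ^ k := by gcongr <;> norm_num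
    _ = (1/2 : ℝ) ^ k := by rw [div_pow, one_pow]

private lemma regroup (f : ℕ → ℕ) (hf : ∀ j, f j ≤ 1) :
    (∑' j : ℕ, (f (j + 1) : ℝ) / 2 ^ (j + 1)) =
      ∑' k : ℕ, ((2 * f (2 * k + 1) + f (2 * k + 2) : ℕ) : ℝ) / 4 ^ (k + 1) := by
  have hS := binSummable f hf
  have hev : Summable (fun k : ℕ => (f (2 * k + 1) : ℝ) / 2 ^ (2 * k + 1)) :=
    hS.comp_injective (fun i j h => by omega)
  have hod : Summable (fun k : ℕ => (f (2 * k + 2) : ℝ) / 2 ^ (2 * k + 2)) :=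
    hS.comp_injective (fun i j h => by omega)
  have hsplit := tsum_even_add_odd (f := fun j : ℕ => (f (j + 1) : ℝ) / 2 ^ (j + 1)) hev hod
  rw [← hsplit, ← Summable.tsum_add hev hod]
  apply tsum_congr
  intro k
  push_cast
  have h4 : (4:ℝ)^(k+1) = 2^(2*k+2) := by
    rw [show (4:ℝ) = 2^2 from by norm_num, ← pow_mul]; congr 1
  have h2 : (2:ℝ)^(2*k+2) = 2^(2*k+1)*2 := pow_succ 2 (2*k+1)
  rw [h4, h2]
  field_simp

theorem dyadic_block_structure (a b c : ℕ → ℕ)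
    (ha : ∀ j, a j ≤ 1) (hb : ∀ j, b j ≤ 1) (hc : ∀ j, c j ≤ 1)
    (ha1 : ¬ ∃ m, ∀ j ≥ m, a j = 1)
    (hb1 : ¬ ∃ m, ∀ j ≥ m, b j = 1)
    (hc1 : ¬ ∃ m, ∀ j ≥ m, c j = 1)
    (haodd : ∀ n ≥ 1, a (2 * n - 1) = 0)
    (hbodd : ∀ n ≥ 1, b (2 * n - 1) = 0)
    (x y z : ℝ)
    (hx0 : x ∈ Set.Ico (0 : ℝ) 1) (hy0 : y ∈ Set.Ico (0 : ℝ) 1)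
    (hx : x = ∑' j : ℕ, (a (j + 1) : ℝ) / 2 ^ (j + 1))
    (hy : y = ∑' j : ℕ, (b (j + 1) : ℝ) / 2 ^ (j + 1))
    (hz : z = ∑' j : ℕ, (c (j + 1) : ℝ) / 2 ^ (j + 1))
    (hsum : x + y = z) :
    ∀ n : ℕ, 1 ≤ n →
      ((c (2 * n - 1), c (2 * n)) ∈ ({(0, 0), (0, 1), (1, 0)} : Set (ℕ × ℕ))) ∧
      (c (2 * n - 1) = 0 ∧ c (2 * n) = 0 → a (2 * n) = 0 ∧ b (2 * n) = 0) ∧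
      (c (2 * n - 1) = 1 ∧ c (2 * n) = 0 → a (2 * n) = 1 ∧ b (2 * n) = 1) ∧
      (c (2 * n - 1) = 0 ∧ c (2 * n) = 1 →
        (a (2 * n) = 1 ∧ b (2 * n) = 0) ∨ (a (2 * n) = 0 ∧ b (2 * n) = 1)) := by
  have hd3 : ∀ (f : ℕ → ℕ), (∀ j, f j ≤ 1) → (¬ ∃ m, ∀ j ≥ m, f j = 1) →
      ∀ m, ∃ k ≥ m, 2 * f (2 * k + 1) + f (2 * k + 2) ≤ 2 := by
    intro f hf hf1 m
    by_contra hcon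
    push_neg at hcon
    apply hf1
    refine ⟨2 * m + 1, fun j hj => ?_⟩
    rcases Nat.even_or_odd j with ⟨k, hk⟩ | ⟨k, hk⟩
    · have hkm : m ≤ k - 1 := by omega
      have := hcon (k-1) hkm
      have h1 := hf (2 * (k-1) + 1)
      have h2 := hf (2 * (k-1) + 2)
      have hj2 : j = 2 * (k-1) + 2 := by omega
      rw [hj2]; omega
    · have := hcon k (by omega)
      have h1 := hf (2 * k + 1)
      have h2 := hf (2 * k + 2)
      have hj2 : j = 2 * k + 1 := by omega
      rw [hj2]; omega
  have haz : ∀ k : ℕ, a (2 * k + 1) = 0 := fun k => by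
    have := haodd (k+1) (by omega); rwa [show 2 * (k+1) - 1 = 2*k+1 from by omega] at this
  have hbz : ∀ k : ℕ, b (2 * k + 1) = 0 := fun k => by
    have := hbodd (k+1) (by omega); rwa [show 2 * (k+1) - 1 = 2*k+1 from by omega] at this
  have heq : (∑' k : ℕ, ((2 * c (2*k+1) + c (2*k+2) : ℕ) : ℝ) / 4 ^ (k + 1)) =
      ∑' k : ℕ, ((a (2*k+2) + b (2*k+2) : ℕ) : ℝ) / 4 ^ (k + 1) := by
    rw [← regroup c hc, ← hz, ← hsum, hx, hy, regroup a ha, regroup b hb]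
    rw [← Summable.tsum_add
      (digitSummable _ 3 (fun k => by have := ha (2*k+1); have := ha (2*k+2); omega))
      (digitSummable _ 3 (fun k => by have := hb (2*k+1); have := hb (2*k+2); omega))]
    apply tsum_congr
    intro k
    rw [haz k, hbz k]
    push_cast
    ring
  have hdu := digit_unique (fun k => 2 * c (2*k+1) + c (2*k+2)) (fun k => a (2*k+2) + b (2*k+2))
    (fun k => by show 2 * c (2*k+1) + c (2*k+2) ≤ 3; have := hc (2*k+1); have := hc (2*k+2); omega)
    (fun k => by show a (2*k+2) + b (2*k+2) ≤ 3; have := ha (2*k+2); have := hb (2*k+2); omega)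
    (hd3 c hc hc1)
    (fun m => ⟨m, le_refl m, by show a (2*m+2) + b (2*m+2) ≤ 2; have := ha (2*m+2); have := hb (2*m+2); omega⟩)
    heq
  intro n hn
  obtain ⟨k, rfl⟩ : ∃ k, n = k + 1 := ⟨n - 1, by omega⟩
  have hmain := hdu k
  rw [show 2 * (k+1) - 1 = 2*k+1 from by omega, show 2 * (k+1) = 2*k+2 from by omega]
  have := hc (2*k+1); have := hc (2*k+2)
  have := ha (2*k+2); have := hb (2*k+2)
  refine ⟨?_, by omega, by omega, by omega⟩
  simp only [Set.mem_insert_iff, Set.mem_singleton_iff, Prod.mk.injEq]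
  omega
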